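/- For each integer n ≥ 1, let W_n be a random variable taking values in {0, 1, …, n} with P(W_n = k) = c_n · k · C(2n, n−k), where C(·,·) is the binomial coefficient and c_n = 2/(n·C(2n, n)). Then the law of W_n²/n converges weakly, as n → ∞, to the exponential distribution with rate 1. -/

import Mathlib

open MeasureTheory ProbabilityTheory Topology Filter

/-- `P(W_n = k) = c_n · k · C(2n, n-k)` with `c_n = 2/(n·C(2n,n))`. -/
noncomputable def pW (n k : ℕ) : ℝ :=
  2 / ((n : ℝ) * (Nat.choose (2 * n) n : ℝ)) * (k : ℝ) * (Nat.choose (2 * n) (n - k) : ℝ)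

/-- key identity -/
lemma key_id {n k : ℕ} (hn : 1 ≤ n) (hk1 : 1 ≤ k) (hkn : k ≤ n) :
    (k : ℝ) * (Nat.choose (2 * n) (n - k) : ℝ)
      = (n : ℝ) * (Nat.choose (2 * n - 1) (n - k) : ℝ)
        - (n : ℝ) * (Nat.choose (2 * n - 1) (n + k) : ℝ) := by
  rcases eq_or_lt_of_le hkn with h | h
  · rw [h, show n - n = 0 from by omega,
      show (2 * n - 1).choose (n + n) = 0 from Nat.choose_eq_zero_of_lt (by omega)]
    simp [Nat.choose_zero_right]
  · -- k < n, set m = n - k ≥ 1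
    set m := n - k with hm
    have hm1 : 1 ≤ m := by omega
    have hmn : m ≤ n - 1 := by omega
    have hsymm : (2 * n - 1).choose (n + k) = (2 * n - 1).choose (m - 1) := by
      rw [show n + k = (2 * n - 1) - (m - 1) by omega]
      exact Nat.choose_symm (by omega)
    rw [hsymm]
    -- Pascal : C(2n, m) = C(2n-1, m-1) + C(2n-1, m)
    have hpascal : (2 * n).choose m = (2 * n - 1).choose (m - 1) + (2 * n - 1).choose m := by
      have := Nat.choose_succ_succ (2 * n - 1) (m - 1)
      rw [show (2*n - 1).succ = 2 * n by omega, show (m-1).succ = m by omega] at this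
      omega
    -- m * C(2n, m) = 2n * C(2n-1, m-1)
    have habs : 2 * n * ((2 * n - 1).choose (m - 1)) = (2 * n).choose m * m := by
      have := Nat.add_one_mul_choose_eq (2 * n - 1) (m - 1)
      rw [show 2*n - 1 + 1 = 2 * n by omega, show m-1+1 = m by omega] at this
      exact this
    have hk : (k : ℝ) = (n : ℝ) - (m : ℝ) := by
      have : (m : ℝ) = (n : ℝ) - (k : ℝ) := by
        rw [hm]; push_cast [Nat.cast_sub hkn]; ring
      linarith
    rw [hk]
    have hp : ((2 * n).choose m : ℝ) = ((2 * n - 1).choose (m - 1) : ℝ) + ((2 * n - 1).choose m : ℝ) := by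
      exact_mod_cast hpascal
    have ha : 2 * (n : ℝ) * ((2 * n - 1).choose (m - 1) : ℝ) = ((2 * n).choose m : ℝ) * (m : ℝ) := by
      exact_mod_cast habs
    nlinarith [hp, ha]

/-- telescoping tail sum -/
lemma tail_sum {n : ℕ} (hn : 1 ≤ n) :
    ∀ d, d ≤ n - 1 →
      ∑ k ∈ Finset.Ico (n - d) (n + 1), (k : ℝ) * (Nat.choose (2 * n) (n - k) : ℝ)
        = (n : ℝ) * (Nat.choose (2 * n - 1) d : ℝ) := by
  intro d
  induction d with
  | zero =>
    intro _
    rw [show n - 0 = n from rfl]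
    rw [Finset.sum_eq_sum_Ico_succ_bot (by omega)]
    rw [show Finset.Ico (n+1) (n+1) = ∅ by simp]
    simp [Nat.sub_self]
  | succ d ih =>
    intro hd
    have hd' : d ≤ n - 1 := by omega
    rw [Finset.sum_eq_sum_Ico_succ_bot (show n - (d+1) < n + 1 by omega)]
    rw [show n - (d + 1) + 1 = n - d by omega, ih hd']
    have hkey := key_id hn (show 1 ≤ n - (d+1) by omega) (show n - (d+1) ≤ n by omega)
    rw [hkey]
    rw [show n - (n - (d + 1)) = d + 1 by omega]
    have hsymm : (2 * n - 1).choose (n + (n - (d + 1))) = (2 * n - 1).choose d := by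
      rw [show n + (n - (d+1)) = (2*n - 1) - d by omega]
      exact Nat.choose_symm (by omega)
    rw [hsymm]
    ring

/-- tail of pW -/
lemma tail_pW {n j : ℕ} (hn : 1 ≤ n) (hj1 : 1 ≤ j) (hjn : j ≤ n) :
    ∑ k ∈ Finset.Ico j (n + 1), pW n k
      = (Nat.choose (2 * n - 1) (n - j) : ℝ) / (Nat.choose (2 * n - 1) (n - 1) : ℝ) := by
  have h1 : ∑ k ∈ Finset.Ico j (n + 1), pW n k
      = 2 / ((n : ℝ) * ((2*n).choose n : ℝ)) *
        ∑ k ∈ Finset.Ico j (n + 1), (k : ℝ) * ((2*n).choose (n - k) : ℝ) := by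
    rw [Finset.mul_sum]
    apply Finset.sum_congr rfl
    intro k _
    rw [pW]; ring
  have h2 := tail_sum hn (n - j) (by omega)
  rw [show n - (n - j) = j by omega] at h2
  rw [h1, h2]
  -- C(2n, n) = 2 * C(2n-1, n-1)
  have hc : ((2*n).choose n : ℝ) = 2 * ((2*n - 1).choose (n - 1) : ℝ) := by
    have hpascal : (2 * n).choose n = (2 * n - 1).choose (n - 1) + (2 * n - 1).choose n := by
      have := Nat.choose_succ_succ (2 * n - 1) (n - 1)
      rw [show (2*n - 1).succ = 2 * n by omega, show (n-1).succ = n by omega] at this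
      omega
    have hs : (2 * n - 1).choose n = (2 * n - 1).choose (n - 1) := by
      rw [← Nat.choose_symm (show n - 1 ≤ 2*n - 1 by omega)]
      congr 1
      omega
    rw [hs] at hpascal
    push_cast [hpascal]; ring
  rw [hc]
  have hn0 : (n : ℝ) ≠ 0 := by positivity
  have hC0 : ((2*n - 1).choose (n - 1) : ℝ) ≠ 0 := by
    have := Nat.choose_pos (show n - 1 ≤ 2*n - 1 by omega)
    positivity
  field_simp


lemma gauss_Ico {j : ℕ} (hj1 : 1 ≤ j) :
    (∑ i ∈ Finset.Ico 1 j, (i:ℝ)) = (j:ℝ) * ((j:ℝ) - 1) / 2 := by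
  have h0 : (∑ i ∈ Finset.range j, (i:ℝ)) = (j:ℝ) * ((j:ℝ) - 1) / 2 := by
    have h := congrArg (Nat.cast : ℕ → ℝ) (Finset.sum_range_id_mul_two j)
    push_cast [Nat.cast_sub hj1] at h
    linarith
  rw [Finset.range_eq_Ico, Finset.sum_eq_sum_Ico_succ_bot (show 0 < j by omega)] at h0
  simpa using h0

lemma sum_neg_two_div {j : ℕ} (hj1 : 1 ≤ j) {c : ℝ} (hc : c ≠ 0) :
    ∑ i ∈ Finset.Ico 1 j, (-(2 * (i:ℝ) / c)) = -((j:ℝ) * ((j:ℝ) - 1) / c) := by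
  calc ∑ i ∈ Finset.Ico 1 j, (-(2 * (i:ℝ) / c))
      = (∑ i ∈ Finset.Ico 1 j, (i:ℝ)) * (-(2/c)) := by
        rw [Finset.sum_mul]; apply Finset.sum_congr rfl; intros; ring
    _ = -((j:ℝ) * ((j:ℝ) - 1) / c) := by rw [gauss_Ico hj1]; field_simp

/-- ratio product formula -/
lemma choose_ratio_prod {n : ℕ} (hn : 1 ≤ n) :
    ∀ j, 1 ≤ j → j ≤ n →
    (Nat.choose (2 * n - 1) (n - j) : ℝ) / (Nat.choose (2 * n - 1) (n - 1) : ℝ)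
      = ∏ i ∈ Finset.Ico 1 j, (((n : ℝ) - i) / ((n : ℝ) + i)) := by
  have hC0 : ((2*n - 1).choose (n - 1) : ℝ) ≠ 0 := by
    exact_mod_cast (Nat.choose_pos (show n - 1 ≤ 2*n - 1 by omega)).ne'
  intro j hj1
  induction j, hj1 using Nat.le_induction with
  | base =>
    intro _
    simp [Finset.Ico_self, div_self hC0]
  | succ j hj1' ih =>
    intro hjn
    have hj : j ≤ n := by omega
    rw [Finset.prod_Ico_succ_top hj1', ← ih hj]
    have hrel : (2*n - 1).choose (n - j) * (n - j) = (2*n - 1).choose (n - j - 1) * (n + j) := by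
      have := Nat.choose_succ_right_eq (2*n - 1) (n - j - 1)
      rw [show n - j - 1 + 1 = n - j by omega, show 2*n - 1 - (n - j - 1) = n + j by omega] at this
      exact this
    have hrelR : ((2*n - 1).choose (n - j) : ℝ) * ((n:ℝ) - j) = ((2*n - 1).choose (n - j - 1) : ℝ) * ((n:ℝ) + j) := by
      have := congrArg (Nat.cast : ℕ → ℝ) hrel
      push_cast [Nat.cast_sub hj] at this
      linarith
    rw [show n - (j + 1) = n - j - 1 by omega]
    have hnj : (0:ℝ) < (n:ℝ) + j := by positivity
    have hthis : ((2*n - 1).choose (n - j - 1) : ℝ) = ((2*n - 1).choose (n - j) : ℝ) * ((n:ℝ) - j) / ((n:ℝ) + j) := by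
      field_simp
      linarith [hrelR]
    rw [hthis]
    ring

/-- upper exponential bound -/
lemma prod_le_exp {n j : ℕ} (hj1 : 1 ≤ j) (hjn : j ≤ n) :
    (∏ i ∈ Finset.Ico 1 j, (((n : ℝ) - i) / ((n : ℝ) + i)))
      ≤ Real.exp (-((j:ℝ) * ((j:ℝ) - 1) / ((n:ℝ) + j))) := by
  have hnj : (0:ℝ) < (n:ℝ) + j := by positivity
  rw [← sum_neg_two_div hj1 hnj.ne', Real.exp_sum]
  apply Finset.prod_le_prod
  · intro i hi
    simp only [Finset.mem_Ico] at hi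
    have hin : (i:ℝ) ≤ (n:ℝ) := by exact_mod_cast (by omega : i ≤ n)
    have hi1 : (1:ℝ) ≤ (i:ℝ) := by exact_mod_cast hi.1
    apply div_nonneg <;> linarith
  · intro i hi
    simp only [Finset.mem_Ico] at hi
    have hi0 : (0:ℝ) ≤ (i:ℝ) := by positivity
    have hi1 : (1:ℝ) ≤ (i:ℝ) := by exact_mod_cast hi.1
    have hni : (0:ℝ) < (n:ℝ) + i := by linarith
    have hij : (i:ℝ) ≤ (j:ℝ) := by exact_mod_cast hi.2.le
    have h1 : ((n:ℝ) - i) / ((n:ℝ) + i) ≤ Real.exp (-(2 * (i:ℝ) / ((n:ℝ) + i))) := by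
      have h2 := Real.add_one_le_exp (-(2 * (i:ℝ) / ((n:ℝ) + i)))
      have h3 : ((n:ℝ) - i) / ((n:ℝ) + i) = -(2 * (i:ℝ) / ((n:ℝ) + i)) + 1 := by
        field_simp; ring
      rw [h3]; exact h2
    refine h1.trans (Real.exp_le_exp.mpr ?_)
    have h7 : 2 * (i:ℝ) / ((n:ℝ) + j) ≤ 2 * (i:ℝ) / ((n:ℝ) + i) := by
      gcongr
    linarith

/-- lower exponential bound -/
lemma exp_le_prod {n j : ℕ} (hj1 : 1 ≤ j) (hjn : j ≤ n) :
    Real.exp (-((j:ℝ) * ((j:ℝ) - 1) / ((n:ℝ) - j + 1)))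
      ≤ ∏ i ∈ Finset.Ico 1 j, (((n : ℝ) - i) / ((n : ℝ) + i)) := by
  have hjn' : (j:ℝ) ≤ (n:ℝ) := by exact_mod_cast hjn
  have hd : (0:ℝ) < (n:ℝ) - j + 1 := by linarith
  rw [← sum_neg_two_div hj1 hd.ne', Real.exp_sum]
  apply Finset.prod_le_prod
  · intro i _; positivity
  · intro i hi
    simp only [Finset.mem_Ico] at hi
    have hi0 : (0:ℝ) ≤ (i:ℝ) := by positivity
    have hij : (i:ℝ) ≤ (j:ℝ) - 1 := by
      have : i + 1 ≤ j := hi.2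
      have := (Nat.cast_le (α := ℝ)).mpr this
      push_cast at this; linarith
    have hni : (0:ℝ) < (n:ℝ) - i := by linarith
    have h1 : Real.exp (-(2 * (i:ℝ) / ((n:ℝ) - i))) ≤ ((n:ℝ) - i) / ((n:ℝ) + i) := by
      have h2 := Real.add_one_le_exp (2 * (i:ℝ) / ((n:ℝ) - i))
      have h3 : ((n:ℝ) + i) / ((n:ℝ) - i) = 2 * (i:ℝ) / ((n:ℝ) - i) + 1 := by
        field_simp; ring
      have h4 : ((n:ℝ) + i) / ((n:ℝ) - i) ≤ Real.exp (2 * (i:ℝ) / ((n:ℝ) - i)) := by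
        rw [h3]; exact h2
      have hni2 : (0:ℝ) < (n:ℝ) + i := by linarith
      have h5 : (0:ℝ) < ((n:ℝ) + i) / ((n:ℝ) - i) := by positivity
      have h6 := one_div_le_one_div_of_le h5 h4
      rw [Real.exp_neg]
      rw [one_div_div] at h6
      calc (Real.exp (2 * (i:ℝ) / ((n:ℝ) - i)))⁻¹
          = 1 / Real.exp (2 * (i:ℝ) / ((n:ℝ) - i)) := by rw [one_div]
        _ ≤ ((n:ℝ) - i) / ((n:ℝ) + i) := h6
    refine le_trans (Real.exp_le_exp.mpr ?_) h1
    have h7 : 2 * (i:ℝ) / ((n:ℝ) - i) ≤ 2 * (i:ℝ) / ((n:ℝ) - j + 1) := by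
      gcongr
      linarith
    linarith

/-- tail of pW equals the product -/
lemma tail_pW_prod {n j : ℕ} (hn : 1 ≤ n) (hj1 : 1 ≤ j) (hjn : j ≤ n) :
    ∑ k ∈ Finset.Ico j (n + 1), pW n k
      = ∏ i ∈ Finset.Ico 1 j, (((n : ℝ) - i) / ((n : ℝ) + i)) := by
  rw [tail_pW hn hj1 hjn, choose_ratio_prod hn j hj1 hjn]

lemma tail_pW_one {n : ℕ} (hn : 1 ≤ n) :
    ∑ k ∈ Finset.Ico 1 (n + 1), pW n k = 1 := by
  rw [tail_pW_prod hn le_rfl hn]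
  simp

lemma mass_pW {n : ℕ} (hn : 1 ≤ n) :
    ∑ k ∈ Finset.range (n + 1), pW n k = 1 := by
  rw [Finset.range_eq_Ico, Finset.sum_eq_sum_Ico_succ_bot (by omega), tail_pW_one hn]
  simp [pW]

/-- the tail limit -/
lemma tendsto_tail {t : ℝ} (ht : 0 < t) :
    Tendsto (fun n : ℕ => ∑ k ∈ Finset.Ico (⌊Real.sqrt (n * t)⌋₊ + 1) (n + 1), pW n k)
      atTop (𝓝 (Real.exp (-t))) := by
  set s : ℕ → ℝ := fun n => Real.sqrt (n * t) with hs_def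
  set j : ℕ → ℕ := fun n => ⌊s n⌋₊ + 1 with hj_def
  have hs0 : ∀ n, 0 ≤ s n := fun n => Real.sqrt_nonneg _
  have hssq : ∀ n : ℕ, s n ^ 2 = n * t := fun n => Real.sq_sqrt (by positivity)
  have hsj : ∀ n, s n < (j n : ℝ) := fun n => by
    simpa [hj_def] using Nat.lt_floor_add_one (s n)
  have hj1 : ∀ n, 1 ≤ j n := fun n => by simp [hj_def]
  have hj1R : ∀ n, (1:ℝ) ≤ (j n : ℝ) := fun n => by exact_mod_cast hj1 n
  have hjs : ∀ n, (j n : ℝ) ≤ s n + 1 := fun n => by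
    have := Nat.floor_le (hs0 n)
    simp only [hj_def]
    push_cast
    linarith
  -- s n / n → 0
  have hu : Tendsto (fun n : ℕ => s n / n) atTop (𝓝 0) := by
    have hsqrt : Tendsto Real.sqrt atTop atTop := by
      refine tendsto_atTop_atTop.mpr fun b => ⟨max (b^2) 0, fun a ha => ?_⟩
      rcases le_or_gt b 0 with hb | hb
      · exact hb.trans (Real.sqrt_nonneg a)
      · rw [← Real.sqrt_sq hb.le]
        exact Real.sqrt_le_sqrt (le_trans (le_max_left _ _) ha)
    have h1 : Tendsto (fun n : ℕ => Real.sqrt t / Real.sqrt n) atTop (𝓝 0) :=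
      Tendsto.div_atTop tendsto_const_nhds
        (hsqrt.comp tendsto_natCast_atTop_atTop)
    apply h1.congr'
    filter_upwards [eventually_ge_atTop 1] with n hn
    have hn0 : (0:ℝ) < (n:ℝ) := by exact_mod_cast hn
    have hsmul : s n = Real.sqrt n * Real.sqrt t := by
      rw [hs_def]; exact Real.sqrt_mul (by positivity) t
    have hsn0 : (0:ℝ) < Real.sqrt n := Real.sqrt_pos.mpr hn0
    rw [hsmul, show (n:ℝ) = Real.sqrt n * Real.sqrt n from (Real.mul_self_sqrt hn0.le).symm]
    rw [Real.sqrt_mul_self hsn0.le, div_eq_div_iff (by positivity) (by positivity)]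
    ring
  have h1n : Tendsto (fun n : ℕ => 1 / (n:ℝ)) atTop (𝓝 0) :=
    tendsto_one_div_atTop_nhds_zero_nat
  -- j n / n → 0
  have hj0 : Tendsto (fun n : ℕ => (j n : ℝ) / n) atTop (𝓝 0) := by
    have hlim : Tendsto (fun n : ℕ => s n / n + 1 / n) atTop (𝓝 0) := by
      simpa using hu.add h1n
    apply tendsto_of_tendsto_of_tendsto_of_le_of_le' tendsto_const_nhds hlim
    · filter_upwards [eventually_ge_atTop 1] with n hn
      positivity
    · filter_upwards [eventually_ge_atTop 1] with n hn
      have hn0 : (0:ℝ) < (n:ℝ) := by exact_mod_cast hn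
      have h2 : (j n : ℝ)/n ≤ (s n + 1)/n := by gcongr; exact hjs n
      rw [add_div] at h2
      exact h2
  -- eventually j n ≤ n
  have hjle : ∀ᶠ n : ℕ in atTop, j n ≤ n := by
    have hev : ∀ᶠ n : ℕ in atTop, s n / n < 1/2 := by
      have := hu.eventually (gt_mem_nhds (show (0:ℝ) < 1/2 by norm_num))
      exact this
    filter_upwards [hev, eventually_ge_atTop 2] with n h1 h2
    have hn0 : (0:ℝ) < (n:ℝ) := by positivity
    have hn2 : (2:ℝ) ≤ (n:ℝ) := by exact_mod_cast h2
    have hs' : s n < n/2 := by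
      have := (div_lt_iff₀ hn0).mp h1
      linarith
    have : (j n : ℝ) ≤ (n:ℝ) := by
      have := hjs n
      linarith
    exact_mod_cast this
  -- numerator limit
  have hnum : Tendsto (fun n : ℕ => (j n : ℝ) * ((j n : ℝ) - 1) / n) atTop (𝓝 t) := by
    have hlow : Tendsto (fun n : ℕ => t - s n / n) atTop (𝓝 t) := by
      have h := Tendsto.sub (tendsto_const_nhds : Tendsto (fun _ : ℕ => t) atTop (𝓝 t)) hu
      simpa using h
    have hhigh : Tendsto (fun n : ℕ => t + s n / n) atTop (𝓝 t) := by
      have h := Tendsto.add (tendsto_const_nhds : Tendsto (fun _ : ℕ => t) atTop (𝓝 t)) hu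
      simpa using h
    apply tendsto_of_tendsto_of_tendsto_of_le_of_le' hlow hhigh
    · filter_upwards [eventually_ge_atTop 1] with n hn
      have hn0 : (0:ℝ) < (n:ℝ) := by exact_mod_cast hn
      have key : (n:ℝ) * t - s n ≤ (j n : ℝ) * ((j n : ℝ) - 1) := by
        nlinarith [hsj n, hjs n, hs0 n, hssq n, hj1R n]
      have h3 : ((n:ℝ) * t - s n)/n ≤ (j n : ℝ) * ((j n : ℝ) - 1) / n := by gcongr
      have h4 : ((n:ℝ) * t - s n)/n = t - s n / n := by field_simp
      linarith
    · filter_upwards [eventually_ge_atTop 1] with n hn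
      have hn0 : (0:ℝ) < (n:ℝ) := by exact_mod_cast hn
      have key : (j n : ℝ) * ((j n : ℝ) - 1) ≤ (n:ℝ) * t + s n := by
        nlinarith [hsj n, hjs n, hs0 n, hssq n, hj1R n]
      have h3 : (j n : ℝ) * ((j n : ℝ) - 1) / n ≤ ((n:ℝ) * t + s n)/n := by gcongr
      have h4 : ((n:ℝ) * t + s n)/n = t + s n / n := by field_simp
      linarith
  -- denominator limits
  have hdenA : Tendsto (fun n : ℕ => ((n:ℝ) - j n + 1) / n) atTop (𝓝 1) := by
    have : Tendsto (fun n : ℕ => 1 - (j n : ℝ)/n + 1/n) atTop (𝓝 1) := by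
      have h := (Tendsto.sub (tendsto_const_nhds : Tendsto (fun _ : ℕ => (1:ℝ)) atTop (𝓝 1)) hj0).add h1n
      simpa using h
    apply this.congr'
    filter_upwards [eventually_ge_atTop 1] with n hn
    have hn0 : (0:ℝ) < (n:ℝ) := by exact_mod_cast hn
    field_simp
  have hdenB : Tendsto (fun n : ℕ => ((n:ℝ) + j n) / n) atTop (𝓝 1) := by
    have : Tendsto (fun n : ℕ => 1 + (j n : ℝ)/n) atTop (𝓝 1) := by
      have h := Tendsto.add (tendsto_const_nhds : Tendsto (fun _ : ℕ => (1:ℝ)) atTop (𝓝 1)) hj0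
      simpa using h
    apply this.congr'
    filter_upwards [eventually_ge_atTop 1] with n hn
    have hn0 : (0:ℝ) < (n:ℝ) := by exact_mod_cast hn
    field_simp
  -- a n and b n
  have ha : Tendsto (fun n : ℕ => (j n : ℝ) * ((j n : ℝ) - 1) / ((n:ℝ) - j n + 1)) atTop (𝓝 t) := by
    have := hnum.div hdenA one_ne_zero
    rw [div_one] at this
    apply this.congr'
    filter_upwards [eventually_ge_atTop 1, hjle] with n hn hjn
    have hn0 : (0:ℝ) < (n:ℝ) := by exact_mod_cast hn
    have hjnR : (j n : ℝ) ≤ (n:ℝ) := by exact_mod_cast hjn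
    have hden0 : (0:ℝ) < (n:ℝ) - j n + 1 := by linarith
    rw [Pi.div_apply]
    field_simp
  have hb : Tendsto (fun n : ℕ => (j n : ℝ) * ((j n : ℝ) - 1) / ((n:ℝ) + j n)) atTop (𝓝 t) := by
    have := hnum.div hdenB one_ne_zero
    rw [div_one] at this
    apply this.congr'
    filter_upwards [eventually_ge_atTop 1] with n hn
    have hn0 : (0:ℝ) < (n:ℝ) := by exact_mod_cast hn
    have hden0 : (0:ℝ) < (n:ℝ) + j n := by linarith [hj1R n]
    rw [Pi.div_apply]
    field_simp
  -- exp limits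
  have hexpA : Tendsto (fun n : ℕ => Real.exp (-((j n : ℝ) * ((j n : ℝ) - 1) / ((n:ℝ) - j n + 1))))
      atTop (𝓝 (Real.exp (-t))) := by
    have := (Real.continuous_exp.tendsto (-t)).comp ha.neg
    exact this
  have hexpB : Tendsto (fun n : ℕ => Real.exp (-((j n : ℝ) * ((j n : ℝ) - 1) / ((n:ℝ) + j n))))
      atTop (𝓝 (Real.exp (-t))) := by
    have := (Real.continuous_exp.tendsto (-t)).comp hb.neg
    exact this
  -- final squeeze
  apply tendsto_of_tendsto_of_tendsto_of_le_of_le' hexpA hexpB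
  · filter_upwards [eventually_ge_atTop 1, hjle] with n hn hjn
    rw [tail_pW_prod hn (hj1 n) hjn]
    exact exp_le_prod (hj1 n) hjn
  · filter_upwards [eventually_ge_atTop 1, hjle] with n hn hjn
    rw [tail_pW_prod hn (hj1 n) hjn]
    exact prod_le_exp (hj1 n) hjn

lemma pW_nonneg (n k : ℕ) : 0 ≤ pW n k := by
  unfold pW
  positivity

lemma pW_zero (n : ℕ) : pW n 0 = 0 := by simp [pW]

lemma filter_eq_Ico {n : ℕ} (hn : 1 ≤ n) {t : ℝ} (ht : 0 ≤ t) :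
    (Finset.range (n+1)).filter (fun k : ℕ => t < (k:ℝ)^2/(n:ℝ))
      = Finset.Ico (⌊Real.sqrt ((n:ℝ)*t)⌋₊ + 1) (n+1) := by
  ext k
  simp only [Finset.mem_filter, Finset.mem_range, Finset.mem_Ico]
  have hn0 : (0:ℝ) < (n:ℝ) := by exact_mod_cast hn
  constructor
  · rintro ⟨hk, hlt⟩
    refine ⟨?_, hk⟩
    rw [lt_div_iff₀ hn0] at hlt
    have h1 : (n:ℝ)*t < (k:ℝ)^2 := by nlinarith
    have hk0 : 0 < k := by
      rcases Nat.eq_zero_or_pos k with h | h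
      · subst h; norm_num at h1; nlinarith
      · exact h
    have h2 : Real.sqrt ((n:ℝ)*t) < (k:ℝ) := by
      rw [Real.sqrt_lt' (by exact_mod_cast hk0)]
      exact h1
    have := (Nat.floor_lt (Real.sqrt_nonneg _)).mpr h2
    omega
  · rintro ⟨h1, h2⟩
    refine ⟨h2, ?_⟩
    have hk0 : 0 < k := by omega
    have h3 : Real.sqrt ((n:ℝ)*t) < (k:ℝ) :=
      (Nat.floor_lt (Real.sqrt_nonneg _)).mp (by omega)
    have h4 : (n:ℝ)*t < (k:ℝ)^2 := (Real.sqrt_lt' (by exact_mod_cast hk0)).mp h3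
    rw [lt_div_iff₀ hn0]
    nlinarith

lemma sum_ite_tail {n : ℕ} (hn : 1 ≤ n) {t : ℝ} (ht : 0 ≤ t) :
    ∑ k ∈ Finset.range (n+1), (if t < (k:ℝ)^2/(n:ℝ) then pW n k else 0)
      = ∑ k ∈ Finset.Ico (⌊Real.sqrt ((n:ℝ)*t)⌋₊ + 1) (n+1), pW n k := by
  rw [← Finset.sum_filter, filter_eq_Ico hn ht]

lemma expMeasure_Iic (x : ℝ) :
    (expMeasure 1) (Set.Iic x) = ENNReal.ofReal (if 0 ≤ x then 1 - Real.exp (-x) else 0) := by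
  rw [show expMeasure 1 = MeasureTheory.volume.withDensity (exponentialPDF 1) from rfl,
    withDensity_apply _ measurableSet_Iic]
  simpa using lintegral_exponentialPDF_eq_antiDeriv one_pos x

lemma expMeasure_Ioi {x : ℝ} (hx : 0 ≤ x) :
    (expMeasure 1) (Set.Ioi x) = ENNReal.ofReal (Real.exp (-x)) := by
  haveI := isProbabilityMeasure_expMeasure (one_pos)
  have he1 : Real.exp (-x) ≤ 1 := Real.exp_le_one_iff.mpr (by linarith)
  rw [← Set.compl_Iic, measure_compl measurableSet_Iic (measure_ne_top _ _),
    expMeasure_Iic, if_pos hx, measure_univ]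
  rw [← ENNReal.ofReal_one, ← ENNReal.ofReal_sub _ (by linarith [Real.exp_pos (-x)])]
  congr 1
  ring

lemma expMeasure_Ioc {a b : ℝ} (ha : 0 ≤ a) (hab : a ≤ b) :
    ((expMeasure 1) (Set.Ioc a b)).toReal = Real.exp (-a) - Real.exp (-b) := by
  haveI := isProbabilityMeasure_expMeasure (one_pos)
  have hsub : Set.Ioc a b = Set.Ioi a \ Set.Ioi b := by
    rw [Set.Ioi_diff_Ioi]
  rw [hsub, measure_diff (Set.Ioi_subset_Ioi hab) measurableSet_Ioi.nullMeasurableSet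
    (measure_ne_top _ _), expMeasure_Ioi ha, expMeasure_Ioi (ha.trans hab)]
  have hle : Real.exp (-b) ≤ Real.exp (-a) := Real.exp_le_exp.mpr (by linarith)
  rw [← ENNReal.ofReal_sub _ (le_of_lt (Real.exp_pos _))]
  exact ENNReal.toReal_ofReal (by linarith)

lemma expMeasure_Ioi_toReal {x : ℝ} (hx : 0 ≤ x) :
    ((expMeasure 1) (Set.Ioi x)).toReal = Real.exp (-x) := by
  rw [expMeasure_Ioi hx]
  exact ENNReal.toReal_ofReal (le_of_lt (Real.exp_pos _))

lemma expMeasure_Iic_zero : (expMeasure 1) (Set.Iic (0:ℝ)) = 0 := by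
  rw [expMeasure_Iic]
  simp

theorem stmt_12 (f : BoundedContinuousFunction ℝ ℝ) :
    Tendsto (fun n : ℕ => ∑ k ∈ Finset.range (n + 1), pW n k * f ((k : ℝ) ^ 2 / n))
      atTop (𝓝 (∫ x, f x ∂(expMeasure 1))) := by
  haveI hP : IsProbabilityMeasure (expMeasure 1) := isProbabilityMeasure_expMeasure one_pos
  set μ : Measure ℝ := expMeasure 1 with hμ
  set I : ℝ := ∫ x, f x ∂μ with hI
  set N : ℕ → ℝ → ℝ := fun n t => ∑ k ∈ Finset.Ico (⌊Real.sqrt ((n:ℝ)*t)⌋₊ + 1) (n+1), pW n k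
    with hNdef
  have hNlim : ∀ t : ℝ, 0 ≤ t → Tendsto (fun n : ℕ => N n t) atTop (𝓝 (Real.exp (-t))) := by
    intro t ht
    rcases eq_or_lt_of_le ht with h | h
    · subst h
      rw [neg_zero, Real.exp_zero]
      apply Tendsto.congr' ?_ (tendsto_const_nhds : Tendsto (fun _ : ℕ => (1:ℝ)) atTop (𝓝 1))
      filter_upwards [eventually_ge_atTop 1] with n hn
      simp only [hNdef, mul_zero, Real.sqrt_zero, Nat.floor_zero, zero_add]
      exact (tail_pW_one hn).symm
    · exact tendsto_tail h
  rw [Metric.tendsto_nhds]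
  intro ε hε
  set B : ℝ := ‖f‖ + 1 with hB
  have hB0 : (0:ℝ) < B := by positivity
  have hfB : ∀ x, |f x| ≤ B := fun x => by
    have := f.norm_coe_le_norm x
    rw [Real.norm_eq_abs] at this
    linarith
  -- choose M
  have hexp1 : Tendsto (fun M : ℕ => B * Real.exp (-(M:ℝ))) atTop (𝓝 0) := by
    have h0 : Tendsto (fun M : ℕ => (Real.exp (-1))^M) atTop (𝓝 0) :=
      tendsto_pow_atTop_nhds_zero_of_lt_one (Real.exp_pos _).le
        (by rw [Real.exp_lt_one_iff]; norm_num)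
    have h1 : Tendsto (fun M : ℕ => Real.exp (-(M:ℝ))) atTop (𝓝 0) := by
      apply h0.congr
      intro M
      rw [show -(M:ℝ) = (M:ℝ) * (-1) by ring, Real.exp_nat_mul]
    have h2 := h1.const_mul B
    simpa using h2
  obtain ⟨M, hM1, hMε⟩ : ∃ M : ℕ, 1 ≤ M ∧ B * Real.exp (-(M:ℝ)) < ε/8 := by
    have hev := (hexp1.eventually (gt_mem_nhds (show (0:ℝ) < ε/8 by linarith))).and
      (eventually_ge_atTop 1)
    obtain ⟨M, hM⟩ := hev.exists
    exact ⟨M, hM.2, hM.1⟩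
  have hMR0 : (0:ℝ) < (M:ℝ) := by exact_mod_cast hM1
  -- uniform continuity on [0, M]
  obtain ⟨δ, hδ0, hδ⟩ : ∃ δ > 0, ∀ x ∈ Set.Icc (0:ℝ) (M:ℝ), ∀ y ∈ Set.Icc (0:ℝ) (M:ℝ),
      dist x y < δ → dist (f x) (f y) < ε/8 := by
    have huc : UniformContinuousOn f (Set.Icc (0:ℝ) (M:ℝ)) :=
      isCompact_Icc.uniformContinuousOn_of_continuous f.continuous.continuousOn
    exact Metric.uniformContinuousOn_iff.mp huc (ε/8) (by linarith)
  -- grid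
  obtain ⟨m, hm⟩ : ∃ m : ℕ, (M:ℝ)/δ < m := exists_nat_gt _
  have hm0 : (0:ℝ) < (m:ℝ) := lt_trans (by positivity) hm
  set c : ℝ := (M:ℝ)/m with hc
  have hc0 : (0:ℝ) < c := by positivity
  have hmc : (m:ℝ) * c = M := by rw [hc]; field_simp
  have hcδ : c < δ := by
    rw [hc, div_lt_iff₀ hm0]
    calc (M:ℝ) < δ * m := by
          have := (div_lt_iff₀ hδ0).mp hm
          linarith
      _ = δ * m := rfl
  set tt : ℕ → ℝ := fun i => (i:ℝ) * c with htt
  have htt0 : ∀ i : ℕ, 0 ≤ tt i := fun i => mul_nonneg (Nat.cast_nonneg i) hc0.le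
  have httmono : ∀ {i k : ℕ}, i ≤ k → tt i ≤ tt k := fun {i k} h =>
    mul_le_mul_of_nonneg_right (by exact_mod_cast h) hc0.le
  have httM : tt m = M := hmc
  -- step function
  set g : ℝ → ℝ := fun x => ∑ i ∈ Finset.range m,
      Set.indicator (Set.Ioc (tt i) (tt (i+1))) (fun _ => f (tt (i+1))) x with hg
  have hg_zero : ∀ x : ℝ, (x ≤ 0 ∨ (M:ℝ) < x) → g x = 0 := by
    intro x hx
    apply Finset.sum_eq_zero
    intro i hi
    apply Set.indicator_of_notMem
    rw [Set.mem_Ioc]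
    rintro ⟨h1, h2⟩
    rcases hx with hx | hx
    · have := htt0 i; linarith
    · have hle : tt (i+1) ≤ tt m := httmono (by simpa using Finset.mem_range.mp hi)
      rw [httM] at hle
      linarith
  have hg_mid : ∀ x : ℝ, 0 < x → x ≤ (M:ℝ) → |f x - g x| < ε/8 := by
    intro x hx0 hxM
    set q : ℕ := ⌈x / c⌉₊ with hq
    have hq1 : 1 ≤ q := Nat.ceil_pos.mpr (by positivity)
    have hqm : q ≤ m := Nat.ceil_le.mpr (by
      rw [div_le_iff₀ hc0]
      rw [← hmc] at hxM
      linarith)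
    have hup : x ≤ tt q := by
      have hle := Nat.le_ceil (x / c)
      rw [div_le_iff₀ hc0] at hle
      exact hle
    have hlow : tt (q-1) < x := by
      by_contra hcon
      push_neg at hcon
      have h1 : x / c ≤ ((q-1:ℕ):ℝ) := by
        rw [div_le_iff₀ hc0]
        exact hcon
      have := Nat.ceil_le.mpr h1
      omega
    have hgx : g x = f (tt q) := by
      simp only [hg]
      rw [Finset.sum_eq_single_of_mem (q-1) (Finset.mem_range.mpr (by omega))]
      · rw [show q - 1 + 1 = q by omega]
        rw [Set.indicator_of_mem (Set.mem_Ioc.mpr ⟨hlow, hup⟩)]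
      · intro j hj hjq
        apply Set.indicator_of_notMem
        rw [Set.mem_Ioc]
        rintro ⟨h1, h2⟩
        rcases lt_or_gt_of_ne hjq with hlt | hgt
        · have : j + 1 ≤ q - 1 := by omega
          have := httmono this
          linarith
        · have : q ≤ j := by omega
          have := httmono this
          linarith
    rw [hgx]
    have hx_mem : x ∈ Set.Icc (0:ℝ) (M:ℝ) := ⟨hx0.le, hxM⟩
    have htq_mem : tt q ∈ Set.Icc (0:ℝ) (M:ℝ) := ⟨htt0 q, by
      have := httmono hqm
      rwa [httM] at this⟩
    have hdist : dist x (tt q) < δ := by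
      rw [Real.dist_eq, abs_lt]
      have hdiff : tt q - tt (q-1) = c := by
        rw [htt]
        push_cast [Nat.cast_sub hq1]
        ring
      constructor <;> linarith
    have := hδ x hx_mem (tt q) htq_mem hdist
    rw [Real.dist_eq] at this
    exact this
  -- A and An
  set A : ℝ := ∑ i ∈ Finset.range m,
      f (tt (i+1)) * (Real.exp (-(tt i)) - Real.exp (-(tt (i+1)))) with hA
  have hAn : Tendsto (fun n : ℕ => ∑ i ∈ Finset.range m,
      f (tt (i+1)) * (N n (tt i) - N n (tt (i+1)))) atTop (𝓝 A) := by
    apply tendsto_finset_sum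
    intro i _
    exact ((hNlim (tt i) (htt0 i)).sub (hNlim (tt (i+1)) (htt0 (i+1)))).const_mul _
  -- ∑ₖ pW * g = An
  have hSg : ∀ n : ℕ, 1 ≤ n →
      ∑ k ∈ Finset.range (n+1), pW n k * g ((k:ℝ)^2/(n:ℝ))
        = ∑ i ∈ Finset.range m, f (tt (i+1)) * (N n (tt i) - N n (tt (i+1))) := by
    intro n hn
    have hswap : ∑ k ∈ Finset.range (n+1), pW n k * g ((k:ℝ)^2/(n:ℝ))
        = ∑ i ∈ Finset.range m, ∑ k ∈ Finset.range (n+1),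
            pW n k * Set.indicator (Set.Ioc (tt i) (tt (i+1))) (fun _ => f (tt (i+1)))
              ((k:ℝ)^2/(n:ℝ)) := by
      rw [← Finset.sum_comm]
      apply Finset.sum_congr rfl
      intro k _
      simp only [hg, Finset.mul_sum]
    rw [hswap]
    apply Finset.sum_congr rfl
    intro i _
    have hab : tt i ≤ tt (i+1) := httmono (Nat.le_succ i)
    have hper : ∀ k : ℕ,
        pW n k * Set.indicator (Set.Ioc (tt i) (tt (i+1))) (fun _ => f (tt (i+1))) ((k:ℝ)^2/(n:ℝ))
          = f (tt (i+1)) * ((if tt i < (k:ℝ)^2/(n:ℝ) then pW n k else 0)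
              - (if tt (i+1) < (k:ℝ)^2/(n:ℝ) then pW n k else 0)) := by
      intro k
      by_cases h1 : tt i < (k:ℝ)^2/(n:ℝ)
      · by_cases h2 : tt (i+1) < (k:ℝ)^2/(n:ℝ)
        · rw [Set.indicator_of_notMem (fun hmem => (not_le.mpr h2) (Set.mem_Ioc.mp hmem).2)]
          simp [h1, h2]
        · rw [Set.indicator_of_mem (Set.mem_Ioc.mpr ⟨h1, not_lt.mp h2⟩)]
          simp only [if_pos h1, if_neg h2, sub_zero]
          ring
      · have h2 : ¬ tt (i+1) < (k:ℝ)^2/(n:ℝ) := fun hcon => h1 (lt_of_le_of_lt hab hcon)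
        rw [Set.indicator_of_notMem (fun hmem => h1 (Set.mem_Ioc.mp hmem).1)]
        simp [h1, h2]
    rw [Finset.sum_congr rfl (fun k _ => hper k), ← Finset.mul_sum,
      Finset.sum_sub_distrib, sum_ite_tail hn (htt0 i), sum_ite_tail hn (htt0 (i+1))]
  -- |A - I| bound
  have hfint : Integrable f μ := f.integrable μ
  have hgint : Integrable g μ := by
    rw [hg]
    apply integrable_finset_sum
    intro i _
    exact (integrable_const _).indicator measurableSet_Ioc
  have hgA : ∫ x, g x ∂μ = A := by
    rw [hg, integral_finset_sum _ (fun i _ => (integrable_const _).indicator measurableSet_Ioc)]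
    apply Finset.sum_congr rfl
    intro i _
    rw [integral_indicator_const _ measurableSet_Ioc, measureReal_def, hμ,
      expMeasure_Ioc (htt0 i) (httmono (Nat.le_succ i)), smul_eq_mul]
    ring
  have hAI : |A - I| ≤ ε/8 + B * Real.exp (-(M:ℝ)) := by
    have hgfint : Integrable (fun x => g x - f x) μ := hgint.sub hfint
    have heq : A - I = ∫ x, (g x - f x) ∂μ := by
      rw [integral_sub hgint hfint, hgA]
    set h : ℝ → ℝ := fun x => ε/8 + B * Set.indicator (Set.Ioi (M:ℝ)) (fun _ => (1:ℝ)) x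
        + B * Set.indicator (Set.Iic (0:ℝ)) (fun _ => (1:ℝ)) x with hh
    have hhint : Integrable h μ := by
      apply Integrable.add
      apply Integrable.add (integrable_const _)
      · exact (((integrable_const (1:ℝ)).indicator measurableSet_Ioi).const_mul B)
      · exact (((integrable_const (1:ℝ)).indicator measurableSet_Iic).const_mul B)
    have hle : ∀ x, |g x - f x| ≤ h x := by
      intro x
      simp only [hh]
      rcases le_or_gt x 0 with hx | hx
      · rw [hg_zero x (Or.inl hx), Set.indicator_of_mem (Set.mem_Iic.mpr hx),
          Set.indicator_of_notMem (by simp only [Set.mem_Ioi]; push_neg; linarith)]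
        have := hfB x
        rw [zero_sub, abs_neg]
        simp only [mul_one, mul_zero]
        linarith
      · rcases le_or_gt x (M:ℝ) with hxM | hxM
        · have h1 := hg_mid x hx hxM
          rw [abs_sub_comm] at h1
          refine h1.le.trans ?_
          show ε/8 ≤ ε / 8 + B * Set.indicator (Set.Ioi (M:ℝ)) (fun _ => (1:ℝ)) x
              + B * Set.indicator (Set.Iic (0:ℝ)) (fun _ => (1:ℝ)) x
          have hnn1 : (0:ℝ) ≤ B * Set.indicator (Set.Ioi (M:ℝ)) (fun _ => (1:ℝ)) x :=
            mul_nonneg hB0.le (Set.indicator_nonneg (fun _ _ => zero_le_one) x)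
          have hnn2 : (0:ℝ) ≤ B * Set.indicator (Set.Iic (0:ℝ)) (fun _ => (1:ℝ)) x :=
            mul_nonneg hB0.le (Set.indicator_nonneg (fun _ _ => zero_le_one) x)
          calc ε/8 ≤ ε/8 + B * Set.indicator (Set.Ioi (M:ℝ)) (fun _ => (1:ℝ)) x :=
                le_add_of_nonneg_right hnn1
            _ ≤ ε/8 + B * Set.indicator (Set.Ioi (M:ℝ)) (fun _ => (1:ℝ)) x
                + B * Set.indicator (Set.Iic (0:ℝ)) (fun _ => (1:ℝ)) x :=
                le_add_of_nonneg_right hnn2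
        · rw [hg_zero x (Or.inr hxM), Set.indicator_of_mem (Set.mem_Ioi.mpr hxM),
            Set.indicator_of_notMem (by simp only [Set.mem_Iic]; push_neg; linarith)]
          have := hfB x
          rw [zero_sub, abs_neg]
          simp only [mul_one, mul_zero]
          linarith
    have hIh : ∫ x, h x ∂μ = ε/8 + B * Real.exp (-(M:ℝ)) := by
      have i0 : Integrable (fun _ : ℝ => ε/8) μ := integrable_const _
      have i1 : Integrable (fun x : ℝ => B * Set.indicator (Set.Ioi (M:ℝ)) (fun _ => (1:ℝ)) x) μ :=
        ((integrable_const (1:ℝ)).indicator measurableSet_Ioi).const_mul B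
      have i2 : Integrable (fun x : ℝ => B * Set.indicator (Set.Iic (0:ℝ)) (fun _ => (1:ℝ)) x) μ :=
        ((integrable_const (1:ℝ)).indicator measurableSet_Iic).const_mul B
      have i01 : Integrable (fun x : ℝ => ε/8 + B * Set.indicator (Set.Ioi (M:ℝ)) (fun _ => (1:ℝ)) x) μ :=
        i0.add i1
      simp only [hh]
      rw [integral_add i01 i2, integral_add i0 i1, integral_const, integral_const_mul,
        integral_const_mul, integral_indicator_const _ measurableSet_Ioi,
        integral_indicator_const _ measurableSet_Iic]
      simp only [measureReal_def]
      rw [hμ, expMeasure_Iic_zero,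
        expMeasure_Ioi_toReal (le_of_lt hMR0)]
      simp [measure_univ]
    calc |A - I| = |∫ x, (g x - f x) ∂μ| := by rw [heq]
      _ ≤ ∫ x, |g x - f x| ∂μ := by
          have := norm_integral_le_integral_norm (μ := μ) (fun x => g x - f x)
          simpa [Real.norm_eq_abs] using this
      _ ≤ ∫ x, h x ∂μ := integral_mono hgfint.abs hhint hle
      _ = ε/8 + B * Real.exp (-(M:ℝ)) := hIh
  -- eventual bounds and conclusion
  have hNM := hNlim (M:ℝ) hMR0.le
  have hNMev : ∀ᶠ n : ℕ in atTop, N n (M:ℝ) < Real.exp (-(M:ℝ)) + ε/(8*B) := by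
    apply hNM.eventually (gt_mem_nhds ?_)
    have : (0:ℝ) < ε/(8*B) := by positivity
    linarith
  have hAnev : ∀ᶠ n : ℕ in atTop,
      dist (∑ i ∈ Finset.range m, f (tt (i+1)) * (N n (tt i) - N n (tt (i+1)))) A < ε/8 :=
    Metric.tendsto_nhds.mp hAn (ε/8) (by linarith)
  filter_upwards [eventually_ge_atTop 1, hNMev, hAnev] with n hn1 hNMb hAnb
  have hn0R : (0:ℝ) < (n:ℝ) := by exact_mod_cast hn1
  set An : ℝ := ∑ i ∈ Finset.range m, f (tt (i+1)) * (N n (tt i) - N n (tt (i+1))) with hAndef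
  -- |S - An| bound
  have hSAn : |(∑ k ∈ Finset.range (n+1), pW n k * f ((k:ℝ)^2/(n:ℝ))) - An|
      ≤ ε/8 + B * N n (M:ℝ) := by
    rw [hAndef, ← hSg n hn1, ← Finset.sum_sub_distrib]
    have hbound : ∀ k ∈ Finset.range (n+1),
        |pW n k * f ((k:ℝ)^2/(n:ℝ)) - pW n k * g ((k:ℝ)^2/(n:ℝ))|
          ≤ pW n k * (ε/8) + B * (if (M:ℝ) < (k:ℝ)^2/(n:ℝ) then pW n k else 0) := by
      intro k _
      rcases Nat.eq_zero_or_pos k with hk0 | hk0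
      · subst hk0
        rw [pW_zero]
        simp only [zero_mul, sub_zero, abs_zero, zero_add]
        split <;> simp
      · have hxk0 : (0:ℝ) < (k:ℝ)^2/(n:ℝ) := by
          have : (0:ℝ) < (k:ℝ) := by exact_mod_cast hk0
          positivity
        rw [← mul_sub, abs_mul, abs_of_nonneg (pW_nonneg n k)]
        rcases le_or_gt ((k:ℝ)^2/(n:ℝ)) (M:ℝ) with hxM | hxM
        · rw [if_neg (not_lt.mpr hxM)]
          have := (hg_mid _ hxk0 hxM).le
          have h2 : pW n k * |f ((k:ℝ)^2/(n:ℝ)) - g ((k:ℝ)^2/(n:ℝ))| ≤ pW n k * (ε/8) :=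
            mul_le_mul_of_nonneg_left this (pW_nonneg n k)
          simp only [mul_zero, add_zero]
          linarith [h2]
        · rw [if_pos hxM, hg_zero _ (Or.inr hxM)]
          rw [sub_zero]
          have h2 : pW n k * |f ((k:ℝ)^2/(n:ℝ))| ≤ pW n k * B :=
            mul_le_mul_of_nonneg_left (hfB _) (pW_nonneg n k)
          have h3 : (0:ℝ) ≤ pW n k * (ε/8) := mul_nonneg (pW_nonneg n k) (by linarith)
          linarith [h2, h3]
    calc |∑ k ∈ Finset.range (n+1), (pW n k * f ((k:ℝ)^2/(n:ℝ)) - pW n k * g ((k:ℝ)^2/(n:ℝ)))|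
        ≤ ∑ k ∈ Finset.range (n+1),
            |pW n k * f ((k:ℝ)^2/(n:ℝ)) - pW n k * g ((k:ℝ)^2/(n:ℝ))| :=
          Finset.abs_sum_le_sum_abs _ _
      _ ≤ ∑ k ∈ Finset.range (n+1),
            (pW n k * (ε/8) + B * (if (M:ℝ) < (k:ℝ)^2/(n:ℝ) then pW n k else 0)) :=
          Finset.sum_le_sum hbound
      _ = ε/8 + B * N n (M:ℝ) := by
          rw [Finset.sum_add_distrib, ← Finset.sum_mul, mass_pW hn1, ← Finset.mul_sum,
            sum_ite_tail hn1 hMR0.le]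
          ring
  -- final
  rw [Real.dist_eq]
  rw [Real.dist_eq] at hAnb
  have hNM2 : B * N n (M:ℝ) < B * Real.exp (-(M:ℝ)) + ε/8 := by
    have := mul_lt_mul_of_pos_left hNMb hB0
    have hBne : B ≠ 0 := ne_of_gt hB0
    rw [mul_add] at this
    rw [show B * (ε/(8*B)) = ε/8 by field_simp] at this
    exact this
  have htri : |(∑ k ∈ Finset.range (n+1), pW n k * f ((k:ℝ)^2/(n:ℝ))) - I|
      ≤ |(∑ k ∈ Finset.range (n+1), pW n k * f ((k:ℝ)^2/(n:ℝ))) - An| + |An - A| + |A - I| := by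
    have t1 := abs_sub_le (∑ k ∈ Finset.range (n+1), pW n k * f ((k:ℝ)^2/(n:ℝ))) An I
    have t2 := abs_sub_le An A I
    linarith
  linarith [hSAn, hAnb, hAI, hMε, hNM2, htri]
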